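/- Let a = (p,q) be a primitive vector in ℤ^{n+1} with q ≥ 1, and let γ ∈ SL(n+1,ℤ) satisfy (p,q)γ = (0,…,0,1). Then for any Q > 0, the matrix h(p/q)a(Q) can be written as γ·h'·a(Q/q), where h' ∈ H; explicitly, h(p/q)·a(q) ∈ γH, where h(x) is the lower-triangular unipotent matrix with bottom-left row −x and a(y) = diag(y^{1/n}I_n, y^{-1}). -/

import Mathlib

open Matrix

noncomputable section

abbrev SL (m : ℕ) (R : Type) [CommRing R] := Matrix.SpecialLinearGroup (Fin m) R

def lastVec (n : ℕ) (R : Type) [CommRing R] : Fin (n+1) → R := Pi.single (Fin.last n) 1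

def Primitive {n : ℕ} (a : Fin (n+1) → ℤ) : Prop := Finset.univ.gcd a = 1

/-- The stabilizer of the row vector (0,...,0,1) under right multiplication. -/
def stab (n : ℕ) (R : Type) [CommRing R] : Subgroup (SL (n+1) R) where
  carrier := {γ | Matrix.vecMul (lastVec n R) (γ : Matrix (Fin (n+1)) (Fin (n+1)) R) = lastVec n R}
  one_mem' := by simp
  mul_mem' := by
    intro a b ha hb
    simp only [Set.mem_setOf_eq] at *
    rw [Matrix.SpecialLinearGroup.coe_mul, ← Matrix.vecMul_vecMul, ha, hb]
  inv_mem' := by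
    intro a ha
    simp only [Set.mem_setOf_eq] at *
    conv_lhs => rw [← ha]
    rw [Matrix.vecMul_vecMul, ← Matrix.SpecialLinearGroup.coe_mul, mul_inv_cancel,
      Matrix.SpecialLinearGroup.coe_one, Matrix.vecMul_one]

/-- The diagonal matrix a(y) = diag(y^{1/n} I_n, y⁻¹). -/
def aMat (n : ℕ) (y : ℝ) : Matrix (Fin (n+1)) (Fin (n+1)) ℝ :=
  Matrix.diagonal (fun i => if i = Fin.last n then y⁻¹ else y ^ ((n : ℝ)⁻¹))

/-- The unipotent matrix h(x), with bottom-left row −x. -/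
def hMat {n : ℕ} (x : Fin n → ℝ) : Matrix (Fin (n+1)) (Fin (n+1)) ℝ :=
  fun i j => if i = j then 1 else
    if i = Fin.last n then (if hj : j = Fin.last n then 0 else -x (j.castPred hj)) else 0

/-- The unipotent integer matrix u(x). -/
def uMat {n : ℕ} (x : Fin n → ℤ) : Matrix (Fin (n+1)) (Fin (n+1)) ℤ :=
  fun i j => if i = j then 1 else
    if i = Fin.last n then (if hj : j = Fin.last n then 0 else x (j.castPred hj)) else 0

/-- The Euclidean norm on ℝ^n. -/
def enorm {n : ℕ} (v : Fin n → ℝ) : ℝ := Real.sqrt (∑ i, (v i)^2)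

abbrev mapSL (n : ℕ) : SL (n+1) ℤ →* SL (n+1) ℝ :=
  Matrix.SpecialLinearGroup.map (Int.castRingHom ℝ)

instance (m : ℕ) : TopologicalSpace (SL m ℝ) :=
  TopologicalSpace.induced (fun A => (A : Matrix (Fin m) (Fin m) ℝ)) inferInstance

lemma det_hMat {n : ℕ} (x : Fin n → ℝ) : (hMat x).det = 1 := by
  rw [Matrix.det_of_lowerTriangular]
  · simp [hMat]
  · intro i j hij
    simp only [OrderDual.toDual_lt_toDual] at hij
    have h1 : i ≠ j := hij.ne
    have h2 : i ≠ Fin.last n := by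
      intro h; subst h; exact absurd hij (not_lt.mpr (Fin.le_last j))
    simp [hMat, h1, h2]

lemma det_aMat {n : ℕ} (hn : 1 ≤ n) {Q : ℝ} (hQ : 0 < Q) : (aMat n Q).det = 1 := by
  rw [aMat, Matrix.det_diagonal, Fin.prod_univ_castSucc]
  have : ∀ i : Fin n, (if (i.castSucc : Fin (n+1)) = Fin.last n then Q⁻¹ else Q ^ ((n:ℝ)⁻¹))
      = Q ^ ((n:ℝ)⁻¹) := fun i => if_neg (Fin.castSucc_lt_last i).ne
  simp only [this, eq_self_iff_true, if_true, Finset.prod_const, Finset.card_univ,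
    Fintype.card_fin]
  rw [← Real.rpow_natCast (Q ^ ((n:ℝ)⁻¹)) n, ← Real.rpow_mul hQ.le,
    inv_mul_cancel₀ (by exact_mod_cast Nat.one_le_iff_ne_zero.mp hn), Real.rpow_one,
    mul_inv_cancel₀ hQ.ne']

lemma aMat_mul_aMat {n : ℕ} {y z : ℝ} (hy : 0 < y) (hz : 0 < z) :
    aMat n y * aMat n z = aMat n (y * z) := by
  rw [aMat, aMat, aMat, Matrix.diagonal_mul_diagonal]
  refine congrArg Matrix.diagonal (funext fun i => ?_)
  by_cases hi : i = Fin.last n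
  · simp only [hi, if_pos rfl]
    exact (mul_inv y z).symm
  · simp only [hi, if_neg, if_false]
    exact (Real.mul_rpow hy.le hz.le).symm

lemma vecMul_hMat {n : ℕ} (x : Fin n → ℝ) (v : Fin (n+1) → ℝ) :
    Matrix.vecMul v (hMat x) = fun j => if hj : j = Fin.last n then v (Fin.last n)
      else v j - v (Fin.last n) * x (j.castPred hj) := by
  have h1 : ∀ i : Fin n, (i.castSucc : Fin (n+1)) ≠ Fin.last n :=
    fun i => (Fin.castSucc_lt_last i).ne
  funext j
  simp only [Matrix.vecMul, dotProduct, hMat]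
  rw [Fin.sum_univ_castSucc]
  by_cases hj : j = Fin.last n
  · subst hj
    simp [h1]
  · rw [dif_neg hj]
    obtain ⟨k, rfl⟩ : ∃ k : Fin n, Fin.castSucc k = j :=
      ⟨j.castPred hj, Fin.castSucc_castPred j hj⟩
    have h2 : (Fin.last n : Fin (n+1)) ≠ k.castSucc := (Fin.castSucc_lt_last k).ne'
    simp only [Fin.castSucc_inj, h1, h2, if_false, mul_ite, mul_one, mul_zero,
      Finset.sum_ite_eq', Finset.mem_univ, if_true, dif_neg (h1 k)]
    rw [dif_neg (fun h => (h : False))]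
    simp only [Fin.castPred_castSucc]
    ring

/-- If (p,q)γ = (0,…,0,1), then h(p/q)a(q) ∈ γH; more generally, for every Q > 0,
h(p/q)a(Q) = γ·h'·a(Q/q) with h' ∈ H. -/
theorem stmt11 (n : ℕ) (hn : 1 ≤ n) (p : Fin n → ℤ) (q : ℤ) (hq : 1 ≤ q)
    (hprim : Primitive (Fin.snoc p q))
    (γ : SL (n+1) ℤ)
    (hγ : Matrix.vecMul (Fin.snoc p q) (γ : Matrix (Fin (n+1)) (Fin (n+1)) ℤ) = lastVec n ℤ) :
    (∃ h ∈ stab n ℝ,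
      hMat (fun i => (p i : ℝ) / (q : ℝ)) * aMat n (q : ℝ)
        = ((mapSL n γ : SL (n+1) ℝ) : Matrix (Fin (n+1)) (Fin (n+1)) ℝ)
            * ((h : SL (n+1) ℝ) : Matrix (Fin (n+1)) (Fin (n+1)) ℝ))
    ∧ ∀ Q : ℝ, 0 < Q → ∃ h ∈ stab n ℝ,
        hMat (fun i => (p i : ℝ) / (q : ℝ)) * aMat n Q
          = ((mapSL n γ : SL (n+1) ℝ) : Matrix (Fin (n+1)) (Fin (n+1)) ℝ)
              * ((h : SL (n+1) ℝ) : Matrix (Fin (n+1)) (Fin (n+1)) ℝ)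
              * aMat n (Q / (q : ℝ)) := by
  have hq0 : (0:ℝ) < (q:ℝ) := by exact_mod_cast lt_of_lt_of_le zero_lt_one hq
  set x : Fin n → ℝ := fun i => (p i : ℝ) / (q : ℝ) with hx
  set γℝ : SL (n+1) ℝ := mapSL n γ with hγℝ
  have hdet : (hMat x * aMat n (q:ℝ)).det = 1 := by
    rw [Matrix.det_mul, det_hMat, det_aMat hn hq0, one_mul]
  set g : SL (n+1) ℝ := ⟨hMat x * aMat n (q:ℝ), hdet⟩ with hg
  -- the real snoc vector
  set v : Fin (n+1) → ℝ := fun j => ((Fin.snoc p q : Fin (n+1) → ℤ) j : ℝ) with hv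
  -- Claim A : vecMul v γℝ = lastVec
  have hA : Matrix.vecMul v (γℝ : Matrix (Fin (n+1)) (Fin (n+1)) ℝ) = lastVec n ℝ := by
    funext j
    have := RingHom.map_vecMul (Int.castRingHom ℝ)
      (γ : Matrix (Fin (n+1)) (Fin (n+1)) ℤ) (Fin.snoc p q) j
    rw [hγ] at this
    have hcoe : (γℝ : Matrix (Fin (n+1)) (Fin (n+1)) ℝ)
        = (γ : Matrix (Fin (n+1)) (Fin (n+1)) ℤ).map (Int.castRingHom ℝ) :=
      Matrix.SpecialLinearGroup.map_apply_coe _ _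
    rw [hv, hcoe]
    rw [show ((Int.castRingHom ℝ) ∘ (Fin.snoc p q : Fin (n+1) → ℤ))
        = (fun j => ((Fin.snoc p q : Fin (n+1) → ℤ) j : ℝ)) from rfl] at this
    rw [← this]
    by_cases hj : j = Fin.last n
    · subst hj; simp [lastVec]
    · simp [lastVec, Pi.single_eq_of_ne hj]
  -- Claim A' : vecMul lastVec γℝ⁻¹ = v
  have hA' : Matrix.vecMul (lastVec n ℝ) ((γℝ⁻¹ : SL (n+1) ℝ) : Matrix (Fin (n+1)) (Fin (n+1)) ℝ)
      = v := by
    rw [← hA, Matrix.vecMul_vecMul, ← Matrix.SpecialLinearGroup.coe_mul, mul_inv_cancel,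
      Matrix.SpecialLinearGroup.coe_one, Matrix.vecMul_one]
  -- Claim B : vecMul v g = lastVec
  have hB : Matrix.vecMul v (g : Matrix (Fin (n+1)) (Fin (n+1)) ℝ) = lastVec n ℝ := by
    show Matrix.vecMul v (hMat x * aMat n (q:ℝ)) = lastVec n ℝ
    rw [← Matrix.vecMul_vecMul, vecMul_hMat]
    funext j
    rw [aMat, Matrix.vecMul_diagonal]
    by_cases hj : j = Fin.last n
    · subst hj
      have hvl : v (Fin.last n) = (q:ℝ) := by simp [hv]
      simp [hvl, lastVec, mul_inv_cancel₀ hq0.ne']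
    · rw [dif_neg hj, if_neg hj]
      obtain ⟨k, rfl⟩ : ∃ k : Fin n, Fin.castSucc k = j :=
        ⟨j.castPred hj, Fin.castSucc_castPred j hj⟩
      have h1 : v k.castSucc = (p k : ℝ) := by simp [hv]
      have h2 : v (Fin.last n) = (q:ℝ) := by simp [hv]
      rw [h1, h2, lastVec, Pi.single_eq_of_ne hj]
      simp only [Fin.castPred_castSucc, hx]
      field_simp
      ring
  set h : SL (n+1) ℝ := γℝ⁻¹ * g with hhdef
  have hmem : h ∈ stab n ℝ := by
    show Matrix.vecMul (lastVec n ℝ) ((h : SL (n+1) ℝ) : Matrix (Fin (n+1)) (Fin (n+1)) ℝ)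
      = lastVec n ℝ
    rw [hhdef, Matrix.SpecialLinearGroup.coe_mul, ← Matrix.vecMul_vecMul, hA', hB]
  have hkey : hMat x * aMat n (q:ℝ)
      = (γℝ : Matrix (Fin (n+1)) (Fin (n+1)) ℝ) * ((h : SL (n+1) ℝ) : Matrix (Fin (n+1)) (Fin (n+1)) ℝ) := by
    rw [hhdef, ← Matrix.SpecialLinearGroup.coe_mul, mul_inv_cancel_left]
  refine ⟨⟨h, hmem, hkey⟩, fun Q hQ => ⟨h, hmem, ?_⟩⟩
  rw [← hkey, mul_assoc, aMat_mul_aMat hq0 (div_pos hQ hq0)]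
  congr 2
  field_simp
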